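/- Consider the integer program min{f(x) : Ax = b, l ≤ x ≤ u, x ∈ ℤ^n} with A ∈ ℤ^{m×n}, b ∈ ℤ^m, finite bounds l, u ∈ ℤ^n, and a separable convex objective function f : ℝ^n → ℝ. Let z₀ be a feasible solution and let z* be an optimal solution with f(z₀) > f(z*). Then there exist an element y of the Graver basis of A and a positive integer λ such that z₀ + λy is feasible and f(z₀) − f(z₀ + λy) ≥ (f(z₀) − f(z*)) / (2n). -/

import Mathlib

open Finset
/-- Two integer vectors are sign-compatible if they agree in sign componentwise. -/
def SignCompat {ι : Type*} (u v : ι → ℤ) : Prop := ∀ i, 0 ≤ u i * v i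

/-- A cycle of an integer matrix `A` is an integer vector in its kernel. -/
def IsCycle {R C : Type*} [Fintype C] (A : Matrix R C ℤ) (y : C → ℤ) : Prop :=
  A.mulVec y = 0

/-- The Graver basis of `A` consists of the nonzero cycles of `A` that cannot be
written as the sum of two sign-compatible nonzero cycles of `A`. -/
def InGraverBasis {R C : Type*} [Fintype C] (A : Matrix R C ℤ) (y : C → ℤ) : Prop :=
  IsCycle A y ∧ y ≠ 0 ∧
    ¬ ∃ u v : C → ℤ, IsCycle A u ∧ IsCycle A v ∧ u ≠ 0 ∧ v ≠ 0 ∧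
      SignCompat u v ∧ y = u + v

/-- A point `x ∈ ℤ^n` is feasible if `Ax = b` and `l ≤ x ≤ u` componentwise. -/
def IsFeasibleZ {m n : ℕ} (A : Matrix (Fin m) (Fin n) ℤ) (b : Fin m → ℤ)
    (l u : Fin n → ℤ) (x : Fin n → ℤ) : Prop :=
  A.mulVec x = b ∧ ∀ j, l j ≤ x j ∧ x j ≤ u j


def IntConf {n : ℕ} (g y : Fin n → ℤ) : Prop := ∀ j, 0 ≤ g j * (y j - g j)

lemma conf_scalar_trans {a b c : ℤ} (h1 : 0 ≤ a * (b - a)) (h2 : 0 ≤ b * (c - b)) :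
    0 ≤ a * (c - a) := by
  rcases lt_trichotomy b 0 with hb | hb | hb
  · have hcb : c ≤ b := by nlinarith
    have ha1 : a ≤ 0 := by nlinarith
    have ha2 : b ≤ a := by nlinarith
    have : c - a ≤ 0 := by linarith
    exact mul_nonneg_iff.mpr (Or.inr ⟨ha1, this⟩)
  · have : a = 0 := by nlinarith
    simp [this]
  · have hcb : b ≤ c := by nlinarith
    have ha1 : 0 ≤ a := by nlinarith
    have ha2 : a ≤ b := by nlinarith
    exact mul_nonneg ha1 (by linarith)

lemma conf_trans' {n : ℕ} {g u y : Fin n → ℤ} (h1 : IntConf g u) (h2 : IntConf u y) :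
    IntConf g y := fun j => conf_scalar_trans (h1 j) (h2 j)

lemma conf_cases {a w : ℤ} (h : 0 ≤ a * (w - a)) :
    (0 ≤ w → 0 ≤ a ∧ a ≤ w) ∧ (w ≤ 0 → w ≤ a ∧ a ≤ 0) := by
  constructor
  · intro hw; constructor <;> nlinarith
  · intro hw; constructor <;> nlinarith

lemma natAbs_add_same_sign {a b : ℤ} (h : 0 ≤ a * b) :
    (a + b).natAbs = a.natAbs + b.natAbs := by
  rcases le_or_gt 0 a with ha | ha <;> rcases le_or_gt 0 b with hb | hb
  · omega
  · have : a = 0 := by nlinarith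
    omega
  · have : b = 0 := by nlinarith
    omega
  · omega

lemma pottier {m n : ℕ} (A : Matrix (Fin m) (Fin n) ℤ) :
    ∀ (N : ℕ) (y : Fin n → ℤ), (∑ j, (y j).natAbs) ≤ N → IsCycle A y →
    ∃ L : List (Fin n → ℤ), (∀ g ∈ L, InGraverBasis A g ∧ IntConf g y) ∧ L.sum = y := by
  intro N
  induction N with
  | zero =>
    intro y hN hy
    have h0 : y = 0 := by
      funext j
      have : (y j).natAbs = 0 := by
        have h1 : (y j).natAbs ≤ ∑ j, (y j).natAbs := by
          simpa using Finset.single_le_sum (f := fun j => (y j).natAbs)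
            (fun i _ => Nat.zero_le _) (Finset.mem_univ j)
        omega
      simpa [Int.natAbs_eq_zero] using this
    exact ⟨[], by simp, by simp [h0]⟩
  | succ N ih =>
    intro y hN hy
    by_cases h0 : y = 0
    · exact ⟨[], by simp, by simp [h0]⟩
    by_cases hg : InGraverBasis A y
    · refine ⟨[y], ?_, by simp⟩
      intro g hgmem
      simp only [List.mem_singleton] at hgmem
      subst hgmem
      exact ⟨hg, fun j => by simp⟩
    · have hdec : ∃ u v : Fin n → ℤ, IsCycle A u ∧ IsCycle A v ∧ u ≠ 0 ∧ v ≠ 0 ∧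
          SignCompat u v ∧ y = u + v := by
        by_contra hc
        exact hg ⟨hy, h0, hc⟩
      obtain ⟨U, v, hcu, hcv, hu0, hv0, hsc, hyuv⟩ := hdec
      have hnorm : ∀ j, (y j).natAbs = (U j).natAbs + (v j).natAbs := by
        intro j
        rw [hyuv]
        exact natAbs_add_same_sign (hsc j)
      have hsum : (∑ j, (U j).natAbs) + (∑ j, (v j).natAbs) = ∑ j, (y j).natAbs := by
        rw [← Finset.sum_add_distrib]
        exact Finset.sum_congr rfl (fun j _ => (hnorm j).symm)
      have hpos : ∀ (wv : Fin n → ℤ), wv ≠ 0 → 1 ≤ ∑ j, (wv j).natAbs := by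
        intro wv hwv
        obtain ⟨j, hj⟩ := Function.ne_iff.mp hwv
        have h1 : 1 ≤ (wv j).natAbs := Int.natAbs_pos.mpr (by simpa using hj)
        calc 1 ≤ (wv j).natAbs := h1
        _ ≤ ∑ j, (wv j).natAbs := by
            simpa using Finset.single_le_sum (f := fun j => (wv j).natAbs)
              (fun i _ => Nat.zero_le _) (Finset.mem_univ j)
      have hNu : (∑ j, (U j).natAbs) ≤ N := by have := hpos v hv0; omega
      have hNv : (∑ j, (v j).natAbs) ≤ N := by have := hpos U hu0; omega
      obtain ⟨Lu, hLu, hLusum⟩ := ih U hNu hcu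
      obtain ⟨Lv, hLv, hLvsum⟩ := ih v hNv hcv
      have hconfU : IntConf U y := by
        intro j; rw [hyuv]; simpa using hsc j
      have hconfV : IntConf v y := by
        intro j; rw [hyuv]
        have : v j * (U j + v j - v j) = U j * v j := by ring
        rw [Pi.add_apply, this]
        exact hsc j
      refine ⟨Lu ++ Lv, ?_, by rw [List.sum_append, hLusum, hLvsum, hyuv]⟩
      intro g hgmem
      rcases List.mem_append.mp hgmem with h | h
      · exact ⟨(hLu g h).1, conf_trans' (hLu g h).2 hconfU⟩
      · exact ⟨(hLv g h).1, conf_trans' (hLv g h).2 hconfV⟩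

lemma super_pair {φ : ℝ → ℝ} (hφ : ConvexOn ℝ Set.univ φ) {x a b : ℝ} (hab : 0 ≤ a * b) :
    φ (x + a) + φ (x + b) ≤ φ (x + (a + b)) + φ x := by
  by_cases hs : a + b = 0
  · have ha0 : a = 0 := by nlinarith
    have hb0 : b = 0 := by nlinarith
    simp [ha0, hb0]
  · have hss : 0 < (a + b) * (a + b) := mul_self_pos.mpr hs
    have has : 0 ≤ a * (a + b) := by nlinarith [sq_nonneg a]
    have hbs : 0 ≤ b * (a + b) := by nlinarith [sq_nonneg b]
    set s := a + b with hsdef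
    have hp : 0 ≤ a / s := by
      rw [div_nonneg_iff]
      rcases lt_trichotomy s 0 with h | h | h
      · right; constructor <;> nlinarith
      · exact absurd h hs
      · left; constructor <;> nlinarith
    have hq : 0 ≤ b / s := by
      rw [div_nonneg_iff]
      rcases lt_trichotomy s 0 with h | h | h
      · right; constructor <;> nlinarith
      · exact absurd h hs
      · left; constructor <;> nlinarith
    have hpq : a / s + b / s = 1 := by field_simp; exact hsdef.symm
    have h1 : φ ((a/s) • (x + s) + (b/s) • x) ≤ (a/s) * φ (x + s) + (b/s) * φ x :=
      hφ.2 (Set.mem_univ _) (Set.mem_univ _) hp hq hpq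
    have h2 : φ ((b/s) • (x + s) + (a/s) • x) ≤ (b/s) * φ (x + s) + (a/s) * φ x :=
      hφ.2 (Set.mem_univ _) (Set.mem_univ _) hq hp (by linarith)
    have e1 : (a/s) • (x + s) + (b/s) • x = x + a := by
      simp only [smul_eq_mul]
      field_simp
      ring
    have e2 : (b/s) • (x + s) + (a/s) • x = x + b := by
      simp only [smul_eq_mul]
      field_simp
      ring
    rw [e1] at h1
    rw [e2] at h2
    have e3 : (a/s) * φ (x+s) + (b/s) * φ (x+s) = φ (x+s) := by
      rw [← add_mul, hpq, one_mul]
    have e4 : (a/s) * φ x + (b/s) * φ x = φ x := by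
      rw [← add_mul, hpq, one_mul]
    linarith [h1, h2]

lemma super_finset {φ : ℝ → ℝ} (hφ : ConvexOn ℝ Set.univ φ) (x : ℝ)
    {ι : Type*} (T : Finset ι) (t : ι → ℝ)
    (hsign : (∀ i ∈ T, 0 ≤ t i) ∨ (∀ i ∈ T, t i ≤ 0)) :
    ∑ i ∈ T, (φ (x + t i) - φ x) ≤ φ (x + ∑ i ∈ T, t i) - φ x := by
  classical
  induction T using Finset.induction_on with
  | empty => simp
  | @insert a T ha ih =>
    have hsignT : (∀ i ∈ T, 0 ≤ t i) ∨ (∀ i ∈ T, t i ≤ 0) := by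
      rcases hsign with h | h
      · exact Or.inl (fun i hi => h i (Finset.mem_insert_of_mem hi))
      · exact Or.inr (fun i hi => h i (Finset.mem_insert_of_mem hi))
    have hab : 0 ≤ t a * ∑ i ∈ T, t i := by
      rcases hsign with h | h
      · exact mul_nonneg (h a (Finset.mem_insert_self a T))
          (Finset.sum_nonneg (fun i hi => h i (Finset.mem_insert_of_mem hi)))
      · exact mul_nonneg_iff.mpr (Or.inr ⟨h a (Finset.mem_insert_self a T),
          Finset.sum_nonpos (fun i hi => h i (Finset.mem_insert_of_mem hi))⟩)
    have hpair := super_pair hφ (x := x) hab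
    rw [Finset.sum_insert ha, Finset.sum_insert ha]
    have := ih hsignT
    linarith [hpair, this]

set_option maxHeartbeats 1000000 in
/-- For the IP `min{f(x) : Ax = b, l ≤ x ≤ u, x ∈ ℤⁿ}` with finite bounds and a
separable convex objective `f(x) = Σ_j f_j(x_j)`, given a feasible `z₀` and an
optimal `z*` with `f(z₀) > f(z*)`, there are a Graver basis element `y` and a
positive integer `λ` such that `z₀ + λy` is feasible and
`f(z₀) − f(z₀ + λy) ≥ (f(z₀) − f(z*))/(2n)`. -/
theorem convex_augmenting_graver_step (m n : ℕ)
    (A : Matrix (Fin m) (Fin n) ℤ) (b : Fin m → ℤ) (l u : Fin n → ℤ)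
    (f : Fin n → ℝ → ℝ) (hf : ∀ j, ConvexOn ℝ Set.univ (f j))
    (z0 zs : Fin n → ℤ)
    (hz0 : IsFeasibleZ A b l u z0)
    (hzs : IsFeasibleZ A b l u zs)
    (hopt : ∀ z, IsFeasibleZ A b l u z →
      ∑ j, f j ((zs j : ℝ)) ≤ ∑ j, f j ((z j : ℝ)))
    (hlt : ∑ j, f j ((zs j : ℝ)) < ∑ j, f j ((z0 j : ℝ))) :
    ∃ (y : Fin n → ℤ) (lam : ℕ), InGraverBasis A y ∧ 0 < lam ∧
      IsFeasibleZ A b l u (z0 + (lam : ℤ) • y) ∧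
      ((∑ j, f j ((z0 j : ℝ))) - ∑ j, f j ((zs j : ℝ))) / (2 * (n : ℝ)) ≤
        (∑ j, f j ((z0 j : ℝ))) - ∑ j, f j (((z0 + (lam : ℤ) • y) j : ℝ)) := by
  classical
  set w : Fin n → ℤ := zs - z0 with hwdef
  have hwj : ∀ j, w j = zs j - z0 j := fun j => rfl
  have hw0 : w ≠ 0 := by
    intro h
    have : zs = z0 := by
      funext j
      have := congrFun h j
      simp [hwj] at this
      omega
    rw [this] at hlt
    exact lt_irrefl _ hlt
  have hwcyc : IsCycle A w := by
    unfold IsCycle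
    rw [hwdef, Matrix.mulVec_sub, hzs.1, hz0.1, sub_self]
  -- the finite set H of Graver elements conformal to w
  set H : Finset (Fin n → ℤ) :=
    Finset.filter (fun g => InGraverBasis A g ∧ IntConf g w)
      (Finset.Icc (fun j => -|w j|) (fun j => |w j|)) with hHdef
  have hmemH : ∀ g : Fin n → ℤ, InGraverBasis A g → IntConf g w → g ∈ H := by
    intro g hg hc
    rw [hHdef, Finset.mem_filter]
    refine ⟨Finset.mem_Icc.mpr ⟨Pi.le_def.mpr fun j => ?_, Pi.le_def.mpr fun j => ?_⟩, hg, hc⟩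
    · have hcc := conf_cases (hc j)
      rcases le_or_gt 0 (w j) with hwj' | hwj'
      · have := hcc.1 hwj'; rw [abs_of_nonneg hwj']; omega
      · have := hcc.2 hwj'.le; rw [abs_of_nonpos hwj'.le]; omega
    · have hcc := conf_cases (hc j)
      rcases le_or_gt 0 (w j) with hwj' | hwj'
      · have := hcc.1 hwj'; rw [abs_of_nonneg hwj']; omega
      · have := hcc.2 hwj'.le; rw [abs_of_nonpos hwj'.le]; omega
  have hHgraver : ∀ g ∈ H, InGraverBasis A g := fun g hg => ((Finset.mem_filter.mp hg).2).1
  have hHconf : ∀ g ∈ H, IntConf g w := fun g hg => ((Finset.mem_filter.mp hg).2).2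
  -- counting identity for lists with elements in H
  have list_count_sum : ∀ (P : List (Fin n → ℤ)), (∀ g ∈ P, g ∈ H) →
      ∀ j, ∑ g ∈ H, (P.count g : ℤ) * g j = (P.sum) j := by
    intro P hP j
    have h2 : P.toFinset ⊆ H := fun g hg => hP g (List.mem_toFinset.mp hg)
    have h3 : ∑ g ∈ P.toFinset, (P.count g : ℤ) * g j = ∑ g ∈ H, (P.count g : ℤ) * g j :=
      Finset.sum_subset h2 (fun g _ hg => by
        rw [List.count_eq_zero.mpr (fun hmem => hg (List.mem_toFinset.mpr hmem))]
        simp)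
    rw [← h3, Finset.sum_list_count P, Finset.sum_apply]
    apply Finset.sum_congr rfl
    intro g _
    simp [Pi.smul_apply, nsmul_eq_mul]
  -- Pottier decomposition of w
  obtain ⟨L, hLmem, hLsum⟩ := pottier A (∑ j, (w j).natAbs) w le_rfl hwcyc
  have hLH : ∀ g ∈ L, g ∈ H := fun g hg => hmemH g (hLmem g hg).1 (hLmem g hg).2
  -- the feasible region D of fractional decompositions
  set D : Set ({g // g ∈ H} → ℝ) :=
    {μ | (∀ h, 0 ≤ μ h) ∧
      ∀ j, (∑ h : {g // g ∈ H}, μ h * (((h : Fin n → ℤ)) j : ℝ)) = (w j : ℝ)} with hDdef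
  have hμ0 : (fun h : {g // g ∈ H} => (L.count (h : Fin n → ℤ) : ℝ)) ∈ D := by
    constructor
    · intro h; positivity
    · intro j
      have h1 := list_count_sum L hLH j
      rw [hLsum] at h1
      have h2 : ∑ h : {g // g ∈ H}, (L.count (h : Fin n → ℤ) : ℝ) * (((h : Fin n → ℤ)) j : ℝ)
          = ∑ g ∈ H, (L.count g : ℝ) * ((g j : ℤ) : ℝ) :=
        Finset.sum_coe_sort H (fun g => (L.count g : ℝ) * ((g j : ℤ) : ℝ))
      rw [h2]
      exact_mod_cast h1
  have hDne : D.Nonempty := ⟨_, hμ0⟩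
  have hcpt : IsCompact D := by
    have hM : ∀ j : Fin n, |(w j : ℝ)| ≤ ∑ j', |(w j' : ℝ)| := fun j =>
      Finset.single_le_sum (f := fun j' => |(w j' : ℝ)|) (fun i _ => abs_nonneg _)
        (Finset.mem_univ j)
    have hsub : D ⊆ Set.Icc (0 : {g // g ∈ H} → ℝ) (fun _ => ∑ j', |(w j' : ℝ)|) := by
      rintro μ ⟨hpos, hsum⟩
      refine ⟨Pi.le_def.mpr fun h => hpos h, Pi.le_def.mpr fun h => ?_⟩
      have hgrav := hHgraver _ h.2
      obtain ⟨j, hj⟩ := Function.ne_iff.mp hgrav.2.1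
      have hj' : ((h : Fin n → ℤ)) j ≠ 0 := by simpa using hj
      have hconf := hHconf _ h.2
      have hsumj := hsum j
      have hb : μ h * |(((h : Fin n → ℤ)) j : ℝ)| ≤ |(w j : ℝ)| := by
        rcases le_or_gt 0 (w j) with hc | hc
        · have hterm' : ∀ h' : {g // g ∈ H}, 0 ≤ μ h' * (((h' : Fin n → ℤ)) j : ℝ) := fun h' =>
            mul_nonneg (hpos h')
              (by exact_mod_cast ((conf_cases (hHconf _ h'.2 j)).1 hc).1)
          have hone := Finset.single_le_sum
            (f := fun h' : {g // g ∈ H} => μ h' * (((h' : Fin n → ℤ)) j : ℝ))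
            (fun h' _ => hterm' h') (Finset.mem_univ h)
          rw [hsumj] at hone
          have hja : 0 ≤ (((h : Fin n → ℤ)) j : ℝ) := by
            exact_mod_cast ((conf_cases (hconf j)).1 hc).1
          rw [abs_of_nonneg hja, abs_of_nonneg (by exact_mod_cast hc : (0:ℝ) ≤ (w j : ℝ))]
          exact hone
        · have hterm' : ∀ h' : {g // g ∈ H}, μ h' * (((h' : Fin n → ℤ)) j : ℝ) ≤ 0 := fun h' =>
            mul_nonpos_iff.mpr (Or.inl ⟨hpos h',
              by exact_mod_cast ((conf_cases (hHconf _ h'.2 j)).2 hc.le).2⟩)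
          have hone := Finset.single_le_sum
            (f := fun h' : {g // g ∈ H} => -(μ h' * (((h' : Fin n → ℤ)) j : ℝ)))
            (fun h' _ => neg_nonneg.mpr (hterm' h')) (Finset.mem_univ h)
          rw [Finset.sum_neg_distrib, hsumj] at hone
          have hb' : -(μ h * (((h : Fin n → ℤ)) j : ℝ)) ≤ -((w j : ℝ)) := hone
          have hja : (((h : Fin n → ℤ)) j : ℝ) ≤ 0 := by
            exact_mod_cast ((conf_cases (hconf j)).2 hc.le).2
          rw [abs_of_nonpos hja, abs_of_nonpos (by exact_mod_cast hc.le : (w j : ℝ) ≤ 0)]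
          linarith
      have h1le : 1 ≤ |(((h : Fin n → ℤ)) j : ℝ)| := by
        have h2 : (1:ℤ) ≤ |((h : Fin n → ℤ)) j| := Int.one_le_abs hj'
        have h3 : ((|((h : Fin n → ℤ)) j| : ℤ) : ℝ) = |(((h : Fin n → ℤ)) j : ℝ)| := by
          push_cast
          rfl
        rw [← h3]
        exact_mod_cast h2
      calc μ h ≤ μ h * |(((h : Fin n → ℤ)) j : ℝ)| := le_mul_of_one_le_right (hpos h) h1le
      _ ≤ |(w j : ℝ)| := hb
      _ ≤ ∑ j', |(w j' : ℝ)| := hM j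
    have hclosed : IsClosed D := by
      have hDeq : D = (⋂ h : {g // g ∈ H}, {μ : {g // g ∈ H} → ℝ | 0 ≤ μ h}) ∩
          ⋂ j : Fin n, {μ : {g // g ∈ H} → ℝ |
            ∑ h : {g // g ∈ H}, μ h * (((h : Fin n → ℤ)) j : ℝ) = (w j : ℝ)} := by
        ext μ
        simp only [hDdef, Set.mem_setOf_eq, Set.mem_inter_iff, Set.mem_iInter]
      rw [hDeq]
      apply IsClosed.inter
      · exact isClosed_iInter fun h => isClosed_le continuous_const (continuous_apply h)
      · exact isClosed_iInter fun j => isClosed_eq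
          (continuous_finset_sum _ fun h _ => (continuous_apply h).mul continuous_const)
          continuous_const
    exact IsCompact.of_isClosed_subset isCompact_Icc hclosed hsub
  set obj : ({g // g ∈ H} → ℝ) → ℝ := fun μ => ∑ h : {g // g ∈ H}, μ h with hobjdef
  have hobjcont : Continuous obj := by
    apply continuous_finset_sum
    intro h _
    exact continuous_apply h
  have hmaxex : ∃ μ ∈ D, IsMaxOn obj D μ := hcpt.exists_isMaxOn hDne hobjcont.continuousOn
  -- a maximizer of minimal support
  set P : ℕ → Prop := fun k => ∃ μ, ((μ ∈ D ∧ IsMaxOn obj D μ) ∧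
      (Finset.univ.filter (fun h => μ h ≠ 0)).card = k) with hPdef
  have hPex : ∃ k, P k := by
    obtain ⟨μ, hμ, hmax⟩ := hmaxex
    exact ⟨_, μ, ⟨hμ, hmax⟩, rfl⟩
  obtain ⟨μ1, ⟨hμ1D, hμ1max⟩, hμ1card⟩ := Nat.find_spec hPex
  set C : Finset {g // g ∈ H} := Finset.univ.filter (fun h => μ1 h ≠ 0) with hCdef
  have hμ1pos : ∀ h ∈ C, 0 < μ1 h := by
    intro h hh
    rw [hCdef, Finset.mem_filter] at hh
    exact lt_of_le_of_ne (hμ1D.1 h) (Ne.symm hh.2)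
  have hμ1zero : ∀ h, h ∉ C → μ1 h = 0 := by
    intro h hh
    rw [hCdef, Finset.mem_filter] at hh
    push_neg at hh
    exact hh (Finset.mem_univ h)
  -- support of μ1 is linearly independent, hence small
  have hlin : LinearIndependent ℝ
      (fun c : {h // h ∈ C} => (fun j => ((((c : {g // g ∈ H}) : Fin n → ℤ)) j : ℝ))) := by
    by_contra hdep
    obtain ⟨fc, hfc0, c0, hc0⟩ := Fintype.not_linearIndependent_iff.mp hdep
    set F : {g // g ∈ H} → ℝ := fun h => if hh : h ∈ C then fc ⟨h, hh⟩ else 0 with hFdef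
    have hFoff : ∀ h, h ∉ C → F h = 0 := by
      intro h hh
      simp [hFdef, dif_neg hh]
    have hFC : ∀ (h : {g // g ∈ H}) (hh : h ∈ C), F h = fc ⟨h, hh⟩ := by
      intro h hh
      simp [hFdef, dif_pos hh]
    have hFc0 : F (c0 : {g // g ∈ H}) = fc c0 := by
      rw [hFC _ c0.2]
    have hFc0ne : F (c0 : {g // g ∈ H}) ≠ 0 := by rw [hFc0]; exact hc0
    have hFsum0 : ∀ j, ∑ h : {g // g ∈ H}, F h * (((h : Fin n → ℤ)) j : ℝ) = 0 := by
      intro j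
      have e0 := congrFun hfc0 j
      rw [Finset.sum_apply] at e0
      have e1 : ∑ c : {h // h ∈ C}, fc c * ((((c : {g // g ∈ H}) : Fin n → ℤ)) j : ℝ) = 0 := by
        simpa [Pi.smul_apply, smul_eq_mul] using e0
      have e2 : ∑ h : {g // g ∈ H}, F h * (((h : Fin n → ℤ)) j : ℝ)
          = ∑ h ∈ C, F h * (((h : Fin n → ℤ)) j : ℝ) := by
        symm
        apply Finset.sum_subset (Finset.subset_univ C)
        intro h _ hh
        rw [hFoff h hh, zero_mul]
      have e3 : ∑ c : {h // h ∈ C}, F (c : {g // g ∈ H}) *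
            ((((c : {g // g ∈ H}) : Fin n → ℤ)) j : ℝ)
          = ∑ h ∈ C, F h * (((h : Fin n → ℤ)) j : ℝ) :=
        Finset.sum_coe_sort C (fun h => F h * (((h : Fin n → ℤ)) j : ℝ))
      have e4 : ∑ c : {h // h ∈ C}, F (c : {g // g ∈ H}) *
            ((((c : {g // g ∈ H}) : Fin n → ℤ)) j : ℝ)
          = ∑ c : {h // h ∈ C}, fc c * ((((c : {g // g ∈ H}) : Fin n → ℤ)) j : ℝ) := by
        apply Finset.sum_congr rfl
        intro c _
        rw [hFC _ c.2]
      rw [e2, ← e3, e4, e1]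
    by_cases hZ : (∑ h : {g // g ∈ H}, F h) = 0
    · -- rotation case: move along the kernel direction keeping the objective
      have hex : ∃ F' : {g // g ∈ H} → ℝ,
          (∀ j, ∑ h : {g // g ∈ H}, F' h * (((h : Fin n → ℤ)) j : ℝ) = 0) ∧
          (∑ h : {g // g ∈ H}, F' h) = 0 ∧ (∀ h, h ∉ C → F' h = 0) ∧
          0 < F' (c0 : {g // g ∈ H}) := by
        rcases lt_or_gt_of_ne hFc0ne with hneg | hpos
        · refine ⟨-F, fun j => ?_, ?_, fun h hh => ?_, ?_⟩
          · simp only [Pi.neg_apply, neg_mul]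
            rw [Finset.sum_neg_distrib, hFsum0 j, neg_zero]
          · simp only [Pi.neg_apply]
            rw [Finset.sum_neg_distrib, hZ, neg_zero]
          · simp [hFoff h hh]
          · simpa using hneg
        · exact ⟨F, hFsum0, hZ, hFoff, hpos⟩
      obtain ⟨F', hF'sum0, hF'Z, hF'off, hF'pos⟩ := hex
      set Q : Finset {g // g ∈ H} := C.filter (fun h => 0 < F' h) with hQdef
      have hQne : Q.Nonempty := ⟨(c0 : {g // g ∈ H}), by
        rw [hQdef, Finset.mem_filter]; exact ⟨c0.2, hF'pos⟩⟩
      obtain ⟨h1, hh1Q, hh1t⟩ := Finset.exists_mem_eq_inf' hQne (fun h => μ1 h / F' h)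
      have hh1Q' : h1 ∈ C.filter (fun h => 0 < F' h) := hh1Q
      have hh1C : h1 ∈ C := (Finset.mem_filter.mp hh1Q').1
      have hh1pos : 0 < F' h1 := (Finset.mem_filter.mp hh1Q').2
      set t1 : ℝ := Q.inf' hQne (fun h => μ1 h / F' h) with ht1def
      have ht1pos : 0 < t1 := by
        rw [ht1def]
        apply (Finset.lt_inf'_iff hQne).mpr
        intro h hh
        rw [hQdef, Finset.mem_filter] at hh
        exact div_pos (hμ1pos h hh.1) hh.2
      set μ2 : {g // g ∈ H} → ℝ := fun h => μ1 h - t1 * F' h with hμ2def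
      have hμ2D : μ2 ∈ D := by
        constructor
        · intro h
          show 0 ≤ μ1 h - t1 * F' h
          by_cases hh : h ∈ C
          · by_cases hp : 0 < F' h
            · have hle : t1 ≤ μ1 h / F' h := by
                rw [ht1def]
                exact Finset.inf'_le _ (by rw [hQdef, Finset.mem_filter]; exact ⟨hh, hp⟩)
              have := (le_div_iff₀ hp).mp hle
              linarith
            · push_neg at hp
              have h2 : 0 ≤ -(t1 * F' h) := by nlinarith
              have h3 := hμ1D.1 h
              linarith
          · rw [hF'off h hh, hμ1zero h hh]
            simp
        · intro j
          have hsp : ∑ h : {g // g ∈ H}, (μ1 h - t1 * F' h) * (((h : Fin n → ℤ)) j : ℝ)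
              = (∑ h : {g // g ∈ H}, μ1 h * (((h : Fin n → ℤ)) j : ℝ))
                - t1 * ∑ h : {g // g ∈ H}, F' h * (((h : Fin n → ℤ)) j : ℝ) := by
            rw [Finset.mul_sum, ← Finset.sum_sub_distrib]
            apply Finset.sum_congr rfl
            intro h _
            ring
          show ∑ h : {g // g ∈ H}, (μ1 h - t1 * F' h) * (((h : Fin n → ℤ)) j : ℝ) = (w j : ℝ)
          rw [hsp, hμ1D.2 j, hF'sum0 j, mul_zero, sub_zero]
      have hobj2 : obj μ2 = obj μ1 := by
        show ∑ h : {g // g ∈ H}, (μ1 h - t1 * F' h) = ∑ h : {g // g ∈ H}, μ1 h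
        rw [Finset.sum_sub_distrib, ← Finset.mul_sum, hF'Z, mul_zero, sub_zero]
      have hmax2 : IsMaxOn obj D μ2 := by
        intro ρ hρ
        have h5 := hμ1max hρ
        simp only [Set.mem_setOf_eq] at h5 ⊢
        rw [hobj2]
        exact h5
      have hsupp2 : (Finset.univ.filter (fun h => μ2 h ≠ 0)).card < Nat.find hPex := by
        have hsub3 : (Finset.univ.filter (fun h => μ2 h ≠ 0)) ⊆ C.erase h1 := by
          intro h hh
          rw [Finset.mem_filter] at hh
          rw [Finset.mem_erase]
          constructor
          · intro heq
            apply hh.2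
            rw [heq]
            show μ1 h1 - t1 * F' h1 = 0
            have ht1v : t1 = μ1 h1 / F' h1 := ht1def.trans hh1t
            rw [ht1v, div_mul_cancel₀ _ (ne_of_gt hh1pos)]
            ring
          · by_contra hhC
            apply hh.2
            show μ1 h - t1 * F' h = 0
            rw [hF'off h hhC, hμ1zero h hhC]
            ring
        have hc5 := Finset.card_le_card hsub3
        have hc6 : (C.erase h1).card < C.card := Finset.card_erase_lt_of_mem hh1C
        have hc7 : C.card = Nat.find hPex := by
          rw [← hμ1card]
        omega
      have := Nat.find_min' hPex ⟨μ2, ⟨hμ2D, hmax2⟩, rfl⟩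
      omega
    · -- improving case: contradict maximality
      set G : {g // g ∈ H} → ℝ := fun h => (∑ h' : {g // g ∈ H}, F h')⁻¹ * F h with hGdef
      have hGsum1 : ∑ h : {g // g ∈ H}, G h = 1 := by
        show ∑ h : {g // g ∈ H}, (∑ h' : {g // g ∈ H}, F h')⁻¹ * F h = 1
        rw [← Finset.mul_sum]
        exact inv_mul_cancel₀ hZ
      have hGsum0 : ∀ j, ∑ h : {g // g ∈ H}, G h * (((h : Fin n → ℤ)) j : ℝ) = 0 := by
        intro j
        show ∑ h : {g // g ∈ H},
            ((∑ h' : {g // g ∈ H}, F h')⁻¹ * F h) * (((h : Fin n → ℤ)) j : ℝ) = 0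
        have : ∀ h : {g // g ∈ H},
            ((∑ h' : {g // g ∈ H}, F h')⁻¹ * F h) * (((h : Fin n → ℤ)) j : ℝ)
            = (∑ h' : {g // g ∈ H}, F h')⁻¹ * (F h * (((h : Fin n → ℤ)) j : ℝ)) := by
          intro h; ring
        rw [Finset.sum_congr rfl (fun h _ => this h), ← Finset.mul_sum, hFsum0 j, mul_zero]
      have hGoff : ∀ h, h ∉ C → G h = 0 := by
        intro h hh
        show (∑ h' : {g // g ∈ H}, F h')⁻¹ * F h = 0
        rw [hFoff h hh, mul_zero]
      have hCne' : C.Nonempty := ⟨(c0 : {g // g ∈ H}), c0.2⟩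
      set t0 : ℝ := C.inf' hCne' (fun h => μ1 h / (|G h| + 1)) with ht0def
      have ht0pos : 0 < t0 := by
        rw [ht0def]
        apply (Finset.lt_inf'_iff hCne').mpr
        intro h hh
        exact div_pos (hμ1pos h hh) (add_pos_of_nonneg_of_pos (abs_nonneg _) one_pos)
      have ht0le : ∀ h ∈ C, t0 * (|G h| + 1) ≤ μ1 h := by
        intro h hh
        have hle : t0 ≤ μ1 h / (|G h| + 1) := by
          rw [ht0def]
          exact Finset.inf'_le _ hh
        exact (le_div_iff₀ (add_pos_of_nonneg_of_pos (abs_nonneg _) one_pos)).mp hle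
      have hmem : (fun h => μ1 h + t0 * G h) ∈ D := by
        constructor
        · intro h
          show 0 ≤ μ1 h + t0 * G h
          by_cases hh : h ∈ C
          · have h1 := ht0le h hh
            have h2 : -(t0 * |G h|) ≤ t0 * G h := by
              have h3 := neg_abs_le (G h)
              nlinarith
            nlinarith
          · rw [hGoff h hh, hμ1zero h hh]
            simp
        · intro j
          show ∑ h : {g // g ∈ H}, (μ1 h + t0 * G h) * (((h : Fin n → ℤ)) j : ℝ) = (w j : ℝ)
          have hsp : ∑ h : {g // g ∈ H}, (μ1 h + t0 * G h) * (((h : Fin n → ℤ)) j : ℝ)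
              = (∑ h : {g // g ∈ H}, μ1 h * (((h : Fin n → ℤ)) j : ℝ))
                + t0 * ∑ h : {g // g ∈ H}, G h * (((h : Fin n → ℤ)) j : ℝ) := by
            rw [Finset.mul_sum, ← Finset.sum_add_distrib]
            apply Finset.sum_congr rfl
            intro h _
            ring
          rw [hsp, hμ1D.2 j, hGsum0 j, mul_zero, add_zero]
      have hgt := hμ1max hmem
      simp only [Set.mem_setOf_eq] at hgt
      have hval : obj (fun h => μ1 h + t0 * G h) = obj μ1 + t0 := by
        show ∑ h : {g // g ∈ H}, (μ1 h + t0 * G h) = (∑ h : {g // g ∈ H}, μ1 h) + t0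
        rw [Finset.sum_add_distrib, ← Finset.mul_sum, hGsum1, mul_one]
      rw [hval] at hgt
      linarith
  have hCn : C.card ≤ n := by
    have h1 := hlin.fintype_card_le_finrank
    rw [Module.finrank_fin_fun, Fintype.card_coe] at h1
    exact h1
  have hCne : C.Nonempty := by
    rcases Finset.eq_empty_or_nonempty C with hC | hC
    · exfalso
      obtain ⟨j, hj⟩ := Function.ne_iff.mp hw0
      have h0 : ∑ h : {g // g ∈ H}, μ1 h * (((h : Fin n → ℤ)) j : ℝ) = 0 :=
        Finset.sum_eq_zero fun h' _ => by
          rw [hμ1zero h' (by rw [hC]; exact Finset.notMem_empty h')]; ring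
      have h1 := hμ1D.2 j
      rw [h0] at h1
      have : w j = 0 := by exact_mod_cast h1.symm
      exact hj (by simpa using this)
    · exact hC
  -- floors
  set ν : {g // g ∈ H} → ℕ := fun h => ⌊μ1 h⌋₊ with hνdef
  set s : Fin n → ℤ := fun j => ∑ h : {g // g ∈ H}, (ν h : ℤ) * ((h : Fin n → ℤ)) j with hsdef
  have hsle : ∀ j, (0 ≤ w j → 0 ≤ s j ∧ s j ≤ w j) ∧ (w j ≤ 0 → w j ≤ s j ∧ s j ≤ 0) := by
    intro j
    have hsum := hμ1D.2 j
    have hscast : (s j : ℝ) = ∑ h : {g // g ∈ H}, (ν h : ℝ) * (((h : Fin n → ℤ)) j : ℝ) := by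
      rw [hsdef]
      push_cast
      rfl
    constructor
    · intro hwj'
      have hje : ∀ h : {g // g ∈ H}, 0 ≤ ((h : Fin n → ℤ)) j :=
        fun h => ((conf_cases (hHconf _ h.2 j)).1 hwj').1
      constructor
      · rw [hsdef]
        exact Finset.sum_nonneg fun h _ => mul_nonneg (Int.natCast_nonneg _) (hje h)
      · have hr : (s j : ℝ) ≤ (w j : ℝ) := by
          rw [hscast, ← hsum]
          apply Finset.sum_le_sum
          intro h _
          exact mul_le_mul_of_nonneg_right (Nat.floor_le (hμ1D.1 h))
            (by exact_mod_cast hje h)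
        exact_mod_cast hr
    · intro hwj'
      have hje : ∀ h : {g // g ∈ H}, ((h : Fin n → ℤ)) j ≤ 0 :=
        fun h => ((conf_cases (hHconf _ h.2 j)).2 hwj').2
      constructor
      · have hr : (w j : ℝ) ≤ (s j : ℝ) := by
          rw [hscast, ← hsum]
          apply Finset.sum_le_sum
          intro h _
          exact mul_le_mul_of_nonpos_right (Nat.floor_le (hμ1D.1 h))
            (by exact_mod_cast hje h)
        exact_mod_cast hr
      · rw [hsdef]
        exact Finset.sum_nonpos fun h _ =>
          mul_nonpos_iff.mpr (Or.inl ⟨Int.natCast_nonneg _, hje h⟩)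
  set w' : Fin n → ℤ := w - s with hw'def
  have hw'cyc : IsCycle A w' := by
    show A.mulVec w' = 0
    have hsvec : s = ∑ h : {g // g ∈ H}, (ν h : ℤ) • ((h : Fin n → ℤ)) := by
      funext j
      rw [hsdef, Finset.sum_apply]
      apply Finset.sum_congr rfl
      intro h _
      simp [smul_eq_mul]
    have hs0 : A.mulVec s = 0 := by
      rw [hsvec, ← Matrix.mulVecLin_apply, map_sum]
      apply Finset.sum_eq_zero
      intro h _
      rw [map_smul, Matrix.mulVecLin_apply,
        show A.mulVec ((h : Fin n → ℤ)) = 0 from (hHgraver _ h.2).1, smul_zero]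
    rw [hw'def, Matrix.mulVec_sub, hs0, show A.mulVec w = 0 from hwcyc, sub_zero]
  have hw'conf : IntConf w' w := by
    intro j
    have h1 := hsle j
    have h2 : w' j = w j - s j := rfl
    rcases le_or_gt 0 (w j) with hc | hc
    · obtain ⟨h3, h4⟩ := h1.1 hc
      nlinarith
    · obtain ⟨h3, h4⟩ := h1.2 hc.le
      nlinarith
  -- Pottier decomposition of the remainder w'
  obtain ⟨L', hL'mem, hL'sum⟩ := pottier A (∑ j, (w' j).natAbs) w' le_rfl hw'cyc
  have hL'H : ∀ g ∈ L', g ∈ H :=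
    fun g hg => hmemH g (hL'mem g hg).1 (conf_trans' (hL'mem g hg).2 hw'conf)
  -- counting: L'.length < C.card
  have hL'len : L'.length + 1 ≤ C.card := by
    have hμ'D : (fun h : {g // g ∈ H} => (ν h : ℝ) + (L'.count ((h : Fin n → ℤ)) : ℝ)) ∈ D := by
      constructor
      · intro h; positivity
      · intro j
        have hsplit : ∑ h : {g // g ∈ H},
              ((ν h : ℝ) + (L'.count ((h : Fin n → ℤ)) : ℝ)) * (((h : Fin n → ℤ)) j : ℝ)
            = (∑ h : {g // g ∈ H}, (ν h : ℝ) * (((h : Fin n → ℤ)) j : ℝ))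
              + ∑ h : {g // g ∈ H}, (L'.count ((h : Fin n → ℤ)) : ℝ) * (((h : Fin n → ℤ)) j : ℝ) := by
          rw [← Finset.sum_add_distrib]
          apply Finset.sum_congr rfl
          intro h _
          ring
        rw [hsplit]
        have e1 : ∑ h : {g // g ∈ H}, (ν h : ℝ) * (((h : Fin n → ℤ)) j : ℝ) = (s j : ℝ) := by
          have hsj : s j = ∑ h : {g // g ∈ H}, (ν h : ℤ) * ((h : Fin n → ℤ)) j := rfl
          rw [hsj]
          push_cast
          rfl
        have e2 : ∑ h : {g // g ∈ H}, (L'.count ((h : Fin n → ℤ)) : ℝ) * (((h : Fin n → ℤ)) j : ℝ)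
            = (w' j : ℝ) := by
          have h1 := list_count_sum L' hL'H j
          rw [hL'sum] at h1
          have h2 : ∑ h : {g // g ∈ H}, (L'.count ((h : Fin n → ℤ)) : ℝ) * (((h : Fin n → ℤ)) j : ℝ)
              = ∑ g ∈ H, (L'.count g : ℝ) * ((g j : ℤ) : ℝ) :=
            Finset.sum_coe_sort H (fun g => (L'.count g : ℝ) * ((g j : ℤ) : ℝ))
          rw [h2]
          exact_mod_cast h1
        rw [e1, e2]
        have h3 : w' j = w j - s j := rfl
        rw [h3]
        push_cast
        ring
    have hobj' : ∑ h : {g // g ∈ H}, ((ν h : ℝ) + (L'.count ((h : Fin n → ℤ)) : ℝ)) ≤ obj μ1 :=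
      hμ1max hμ'D
    have hlen : ∑ h : {g // g ∈ H}, (L'.count ((h : Fin n → ℤ)) : ℝ) = (L'.length : ℝ) := by
      have h1 : ∑ g ∈ H, L'.count g = L'.length := by
        rw [← List.sum_toFinset_count_eq_length L']
        exact (Finset.sum_subset (fun g hg => hL'H g (List.mem_toFinset.mp hg))
          (fun g _ hg => List.count_eq_zero.mpr fun hmem => hg (List.mem_toFinset.mpr hmem))).symm
      have h2 : ∑ h : {g // g ∈ H}, (L'.count ((h : Fin n → ℤ)) : ℝ) = ∑ g ∈ H, (L'.count g : ℝ) :=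
        Finset.sum_coe_sort H (fun g => (L'.count g : ℝ))
      rw [h2]
      exact_mod_cast h1
    have hfrac : obj μ1 - ∑ h : {g // g ∈ H}, (ν h : ℝ) < (C.card : ℝ) := by
      have hf1 : obj μ1 - ∑ h : {g // g ∈ H}, (ν h : ℝ) = ∑ h ∈ C, (μ1 h - (ν h : ℝ)) := by
        rw [hobjdef, ← Finset.sum_sub_distrib]
        symm
        apply Finset.sum_subset (Finset.subset_univ C)
        intro h _ hh
        have hz := hμ1zero h hh
        have hν0 : (ν h : ℝ) = ((⌊μ1 h⌋₊ : ℕ) : ℝ) := rfl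
        rw [hz, hν0, hz]
        simp
      rw [hf1]
      calc ∑ h ∈ C, (μ1 h - (ν h : ℝ)) < ∑ h ∈ C, 1 := by
            apply Finset.sum_lt_sum_of_nonempty hCne
            intro h _
            have h1 := Nat.lt_floor_add_one (μ1 h)
            have h2 : (ν h : ℝ) = (⌊μ1 h⌋₊ : ℝ) := rfl
            rw [h2]
            linarith
      _ = (C.card : ℝ) := by rw [Finset.sum_const]; simp
    have hsplit2 : ∑ h : {g // g ∈ H}, ((ν h : ℝ) + (L'.count ((h : Fin n → ℤ)) : ℝ))
        = (∑ h : {g // g ∈ H}, (ν h : ℝ)) + (L'.length : ℝ) := by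
      rw [Finset.sum_add_distrib, hlen]
    have hr : (L'.length : ℝ) < (C.card : ℝ) := by
      rw [hsplit2] at hobj'
      linarith
    have : L'.length < C.card := by exact_mod_cast hr
    omega
  -- the pieces
  set K : (Fin n → ℤ) → ℕ :=
    fun g => (if hg : g ∈ H then ν ⟨g, hg⟩ else 0) + L'.count g with hKdef
  have hKsum : ∀ j, ∑ g ∈ H, (K g : ℤ) * g j = w j := by
    intro j
    have hstep : ∀ g ∈ H, (K g : ℤ) * g j =
        (if hg : g ∈ H then (ν ⟨g, hg⟩ : ℤ) else 0) * g j + (L'.count g : ℤ) * g j := by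
      intro g hgH
      rw [hKdef]
      push_cast
      simp only [dif_pos hgH]
      push_cast
      ring
    rw [Finset.sum_congr rfl hstep, Finset.sum_add_distrib]
    have h1 : ∑ g ∈ H, (if hg : g ∈ H then (ν ⟨g, hg⟩ : ℤ) else 0) * g j = s j := by
      have e := Finset.sum_coe_sort H (fun g => (if hg : g ∈ H then (ν ⟨g, hg⟩ : ℤ) else 0) * g j)
      have hsj : s j = ∑ h : {g // g ∈ H}, (ν h : ℤ) * ((h : Fin n → ℤ)) j := rfl
      rw [hsj]
      refine e.symm.trans ?_
      apply Finset.sum_congr rfl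
      intro h _
      rw [dif_pos h.2]
    have h2 : ∑ g ∈ H, (L'.count g : ℤ) * g j = w' j := by
      rw [list_count_sum L' hL'H j, hL'sum]
    have h3 : w' j = w j - s j := rfl
    linarith [h1, h2, h3]
  set T : Finset (Fin n → ℤ) := H.filter (fun g => K g ≠ 0) with hTdef
  have hTsum : ∀ j, ∑ g ∈ T, (K g : ℤ) * g j = w j := by
    intro j
    rw [hTdef]
    rw [Finset.sum_filter_of_ne]
    · exact hKsum j
    · intro g _ hne hKg
      exact hne (by rw [hKg]; simp)
  have hTsub : T ⊆ H := Finset.filter_subset _ _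
  have hTne0 : T.Nonempty := by
    rcases Finset.eq_empty_or_nonempty T with hT | hT
    · exfalso
      obtain ⟨j, hj⟩ := Function.ne_iff.mp hw0
      have h0 := hTsum j
      rw [hT, Finset.sum_empty] at h0
      exact hj (by simpa using h0.symm)
    · exact hT
  have hTcard : T.card ≤ 2 * n - 1 ∧ 1 ≤ T.card := by
    have hsub2 : T ⊆ (C.image Subtype.val) ∪ L'.toFinset := by
      intro g hg
      rw [hTdef, Finset.mem_filter] at hg
      obtain ⟨hgH, hKne⟩ := hg
      rw [Finset.mem_union]
      by_cases hcount : g ∈ L'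
      · exact Or.inr (List.mem_toFinset.mpr hcount)
      · left
        have hcount0 : L'.count g = 0 := List.count_eq_zero.mpr hcount
        have hKg : K g = ν ⟨g, hgH⟩ + L'.count g := by
          have : K g = (if hg : g ∈ H then ν ⟨g, hg⟩ else 0) + L'.count g := rfl
          rw [this, dif_pos hgH]
        have hν : ν ⟨g, hgH⟩ ≠ 0 := by
          intro h0
          exact hKne (by rw [hKg, h0, hcount0])
        have hμpos : μ1 ⟨g, hgH⟩ ≠ 0 := by
          intro h0
          apply hν
          have : ν ⟨g, hgH⟩ = ⌊μ1 ⟨g, hgH⟩⌋₊ := rfl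
          rw [this, h0]
          simp
        have hmemC : (⟨g, hgH⟩ : {g // g ∈ H}) ∈ C := by
          rw [hCdef, Finset.mem_filter]
          exact ⟨Finset.mem_univ _, hμpos⟩
        exact Finset.mem_image_of_mem Subtype.val hmemC
    have hc1 := Finset.card_le_card hsub2
    have hc2 := Finset.card_union_le (C.image Subtype.val) L'.toFinset
    have hc12 : T.card ≤ (C.image Subtype.val).card + L'.toFinset.card :=
      le_trans hc1 hc2
    have hc3 : (C.image Subtype.val).card ≤ C.card :=
      Finset.card_image_le (s := C) (f := Subtype.val)
    have hc4 := List.toFinset_card_le L'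
    constructor
    · omega
    · exact Finset.card_pos.mpr hTne0
  have hTne : T.Nonempty := by
    rw [← Finset.card_pos]
    omega
  -- termwise bounds: each piece is conformal
  have hterm : ∀ j, ∀ g ∈ T, (0 ≤ w j → 0 ≤ (K g : ℤ) * g j ∧ (K g : ℤ) * g j ≤ w j) ∧
      (w j ≤ 0 → w j ≤ (K g : ℤ) * g j ∧ (K g : ℤ) * g j ≤ 0) := by
    intro j g hg
    have hsum := hTsum j
    constructor
    · intro hwj'
      have hpos : ∀ g' ∈ T, 0 ≤ (K g' : ℤ) * g' j := fun g' hg' =>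
        mul_nonneg (Int.natCast_nonneg _) ((conf_cases (hHconf g' (hTsub hg') j)).1 hwj').1
      refine ⟨hpos g hg, ?_⟩
      calc (K g : ℤ) * g j ≤ ∑ g' ∈ T, (K g' : ℤ) * g' j := Finset.single_le_sum hpos hg
      _ = w j := hsum
    · intro hwj'
      have hneg : ∀ g' ∈ T, (K g' : ℤ) * g' j ≤ 0 := fun g' hg' =>
        mul_nonpos_iff.mpr (Or.inl ⟨Int.natCast_nonneg _,
          ((conf_cases (hHconf g' (hTsub hg') j)).2 hwj').2⟩)
      refine ⟨?_, hneg g hg⟩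
      have hb := Finset.single_le_sum (f := fun g' => -((K g' : ℤ) * g' j))
        (fun g' hg' => neg_nonneg.mpr (hneg g' hg')) hg
      have hbs : ∑ g' ∈ T, -((K g' : ℤ) * g' j) = -(w j) := by
        rw [Finset.sum_neg_distrib, hsum]
      rw [hbs] at hb
      have hb' : -((K g : ℤ) * g j) ≤ -w j := hb
      linarith
  -- superadditivity
  set gap : ℝ := (∑ j, f j ((z0 j : ℝ))) - ∑ j, f j ((zs j : ℝ)) with hgapdef
  have hgappos : 0 < gap := by rw [hgapdef]; linarith
  set Φ : (Fin n → ℤ) → ℝ :=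
    fun g => (∑ j, f j ((z0 j : ℝ) + (K g : ℝ) * (g j : ℝ))) - ∑ j, f j ((z0 j : ℝ)) with hΦdef
  have hsuper : ∑ g ∈ T, Φ g ≤ -gap := by
    have hcast : ∀ g ∈ T, ∀ j : Fin n, ((((K g : ℤ) * g j) : ℤ) : ℝ) = (K g : ℝ) * (g j : ℝ) := by
      intro g _ j; push_cast; ring
    calc ∑ g ∈ T, Φ g
        = ∑ g ∈ T, ∑ j, (f j ((z0 j : ℝ) + (K g : ℝ) * (g j : ℝ)) - f j ((z0 j : ℝ))) := by
          apply Finset.sum_congr rfl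
          intro g _
          rw [hΦdef, Finset.sum_sub_distrib]
      _ = ∑ j, ∑ g ∈ T, (f j ((z0 j : ℝ) + (K g : ℝ) * (g j : ℝ)) - f j ((z0 j : ℝ))) :=
          Finset.sum_comm
      _ ≤ ∑ j, (f j ((z0 j : ℝ) + (w j : ℝ)) - f j ((z0 j : ℝ))) := by
          apply Finset.sum_le_sum
          intro j _
          have hsign : (∀ g ∈ T, 0 ≤ (K g : ℝ) * (g j : ℝ)) ∨
              (∀ g ∈ T, (K g : ℝ) * (g j : ℝ) ≤ 0) := by
            rcases le_or_gt 0 (w j) with hc | hc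
            · left
              intro g hg
              rw [← hcast g hg j]
              exact_mod_cast ((hterm j g hg).1 hc).1
            · right
              intro g hg
              rw [← hcast g hg j]
              exact_mod_cast ((hterm j g hg).2 hc.le).2
          have hs := super_finset (hf j) ((z0 j : ℝ)) T (fun g => (K g : ℝ) * (g j : ℝ)) hsign
          have hts : ∑ g ∈ T, (K g : ℝ) * (g j : ℝ) = (w j : ℝ) := by
            exact_mod_cast hTsum j
          rwa [hts] at hs
      _ = (∑ j, f j ((zs j : ℝ))) - ∑ j, f j ((z0 j : ℝ)) := by
          rw [Finset.sum_sub_distrib]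
          congr 1
          apply Finset.sum_congr rfl
          intro j _
          congr 1
          rw [hwj j]
          push_cast
          ring
      _ = -gap := by rw [hgapdef]; ring
  -- averaging
  have havg : ∃ g ∈ T, Φ g ≤ -gap / (T.card : ℝ) := by
    apply Finset.exists_le_of_sum_le hTne
    rw [Finset.sum_const, nsmul_eq_mul]
    have hc0 : (T.card : ℝ) ≠ 0 := Nat.cast_ne_zero.mpr (by omega)
    have he : (T.card : ℝ) * (-gap / (T.card : ℝ)) = -gap := by field_simp
    rw [he]
    exact hsuper
  obtain ⟨g, hgT, hgΦ⟩ := havg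
  have hn1 : 1 ≤ n := by
    by_contra hn
    have hn0 : n = 0 := by omega
    subst hn0
    simp at hlt
  have hbound : Φ g ≤ -(gap / (2 * (n : ℝ))) := by
    have h2n : (T.card : ℝ) ≤ 2 * (n : ℝ) := by
      have h1 := hTcard.1
      have : (T.card : ℝ) ≤ ((2 * n - 1 : ℕ) : ℝ) := by exact_mod_cast h1
      have h2 : ((2 * n - 1 : ℕ) : ℝ) ≤ 2 * (n : ℝ) := by
        have : (2 * n - 1 : ℕ) ≤ 2 * n := by omega
        calc ((2 * n - 1 : ℕ) : ℝ) ≤ ((2 * n : ℕ) : ℝ) := by exact_mod_cast this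
        _ = 2 * (n : ℝ) := by push_cast; ring
      linarith
    have hcard0 : (0 : ℝ) < (T.card : ℝ) := by
      have := hTcard.2
      exact_mod_cast Nat.lt_of_lt_of_le Nat.zero_lt_one this
    have := div_le_div_of_nonneg_left hgappos.le hcard0 h2n
    calc Φ g ≤ -gap / (T.card : ℝ) := hgΦ
    _ = -(gap / (T.card : ℝ)) := by ring
    _ ≤ -(gap / (2 * (n : ℝ))) := by linarith
  -- conclusion
  refine ⟨g, K g, hHgraver g (hTsub hgT), ?_, ⟨?_, ?_⟩, ?_⟩
  · have := (Finset.mem_filter.mp hgT).2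
    omega
  · show A.mulVec (z0 + ((K g : ℕ) : ℤ) • g) = b
    rw [Matrix.mulVec_add, hz0.1]
    have h0 : A.mulVec (((K g : ℕ) : ℤ) • g) = 0 := by
      rw [← Matrix.mulVecLin_apply, map_smul, Matrix.mulVecLin_apply,
        show A.mulVec g = 0 from (hHgraver g (hTsub hgT)).1, smul_zero]
    rw [h0, add_zero]
  · -- bounds
    intro j
    have h1 := hterm j g hgT
    have h2 := (hz0.2 j)
    have h3 := (hzs.2 j)
    have h4 : zs j = z0 j + w j := by rw [hwj]; ring
    have h5 : (z0 + ((K g : ℕ) : ℤ) • g) j = z0 j + (K g : ℤ) * g j := by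
      simp [Pi.add_apply, Pi.smul_apply, smul_eq_mul]
    rw [h5]
    rcases le_or_gt 0 (w j) with hc | hc
    · obtain ⟨h6, h7⟩ := h1.1 hc
      constructor <;> linarith
    · obtain ⟨h6, h7⟩ := h1.2 hc.le
      constructor <;> linarith
  · -- the improvement inequality
    have h5 : ∀ j, (((z0 + ((K g : ℕ) : ℤ) • g) j : ℤ) : ℝ) = (z0 j : ℝ) + (K g : ℝ) * (g j : ℝ) := by
      intro j
      have : (z0 + ((K g : ℕ) : ℤ) • g) j = z0 j + (K g : ℤ) * g j := by
        simp [Pi.add_apply, Pi.smul_apply, smul_eq_mul]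
      rw [this]
      push_cast
      ring
    have h6 : ∑ j, f j (((z0 + ((K g : ℕ) : ℤ) • g) j : ℝ)) =
        ∑ j, f j ((z0 j : ℝ) + (K g : ℝ) * (g j : ℝ)) := by
      apply Finset.sum_congr rfl
      intro j _
      rw [h5 j]
    rw [h6]
    have : Φ g = (∑ j, f j ((z0 j : ℝ) + (K g : ℝ) * (g j : ℝ))) - ∑ j, f j ((z0 j : ℝ)) := rfl
    rw [hgapdef] at hbound ⊢
    have hgap2 : (∑ j, f j ((z0 j : ℝ))) - ∑ j, f j ((zs j : ℝ)) > 0 := by linarith [hgappos]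
    linarith [hbound]
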